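/- arXiv:2106.01388 — 8 statements merged into one kernel-verified Lean document; each statement's English description precedes it below -/
import Mathlib

section
/- Let f(θ) = ⟨ψ| e^{iθG} A e^{-iθG} |ψ⟩ with G Hermitian, G² = r²I, A Hermitian, r > 0. Then for any real shifts γ₁, γ₂: r·[f(θ + γ₁) - f(θ - γ₂)] = ((sin(2rγ₁) + sin(2rγ₂))/2)·f'(θ) - ((cos(2rγ₁) - cos(2rγ₂))/(4r))·f''(θ). (Generalized parameter shift rule.) -/
open Matrix

lemma exp_IG {n : ℕ} (G : Matrix (Fin n) (Fin n) ℂ) (r : ℝ) (hr : r ≠ 0)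
    (hG2 : G * G = ((r : ℂ) ^ 2) • (1 : Matrix (Fin n) (Fin n) ℂ)) (t : ℝ) :
    NormedSpace.exp ((Complex.I * (t : ℂ)) • G) =
      (Complex.cos ((r : ℂ) * t)) • (1 : Matrix (Fin n) (Fin n) ℂ) +
        (Complex.sin ((r : ℂ) * t) * Complex.I / (r : ℂ)) • G := by
  have hrC : (r : ℂ) ≠ 0 := by exact_mod_cast hr
  have hG2' : G ^ 2 = ((r : ℂ) ^ 2) • (1 : Matrix (Fin n) (Fin n) ℂ) := by
    rw [sq, hG2]
  rw [NormedSpace.exp_eq_tsum (𝕂 := ℂ)]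
  refine HasSum.tsum_eq ?_
  refine HasSum.even_add_odd ?_ ?_
  · have h := (Complex.hasSum_cos' ((r : ℂ) * t)).smul_const
      (1 : Matrix (Fin n) (Fin n) ℂ)
    refine h.congr_fun ?_
    intro k
    have hGe : G ^ (2 * k) = ((r : ℂ) ^ (2 * k)) • (1 : Matrix (Fin n) (Fin n) ℂ) := by
      rw [pow_mul, hG2', smul_pow, one_pow, ← pow_mul]
    rw [smul_pow, hGe, smul_smul, smul_smul]
    congr 1
    ring
  · have h1 := ((Complex.hasSum_sin' ((r : ℂ) * t)).mul_right Complex.I).div_const (r : ℂ)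
    simp only [div_mul_cancel₀ _ Complex.I_ne_zero] at h1
    have h := h1.smul_const G
    refine h.congr_fun ?_
    intro k
    have hGo : G ^ (2 * k + 1) = ((r : ℂ) ^ (2 * k)) • G := by
      rw [pow_succ, pow_mul, hG2', smul_pow, one_pow, ← pow_mul, smul_mul, one_mul]
    rw [smul_pow, hGo, smul_smul, smul_smul]
    congr 1
    have hfac : (((2 * k + 1).factorial : ℂ)) ≠ 0 := by
      exact_mod_cast (2 * k + 1).factorial_ne_zero
    field_simp
    ring

theorem stmt_2 {n : ℕ} (ψ : Fin n → ℂ) (hψ : star ψ ⬝ᵥ ψ = 1)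
    (A G : Matrix (Fin n) (Fin n) ℂ) (hA : A.IsHermitian) (hG : G.IsHermitian)
    (r : ℝ) (hr : 0 < r)
    (hG2 : G * G = ((r : ℂ) ^ 2) • (1 : Matrix (Fin n) (Fin n) ℂ))
    (f : ℝ → ℝ)
    (hf : ∀ θ : ℝ, f θ =
      (star ψ ⬝ᵥ ((NormedSpace.exp ((Complex.I * (θ : ℂ)) • G) * A *
        NormedSpace.exp ((-(Complex.I * (θ : ℂ))) • G)) *ᵥ ψ)).re) (θ γ₁ γ₂ : ℝ) :
    r * (f (θ + γ₁) - f (θ - γ₂)) =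
      ((Real.sin (2 * r * γ₁) + Real.sin (2 * r * γ₂)) / 2) * deriv f θ
        - ((Real.cos (2 * r * γ₁) - Real.cos (2 * r * γ₂)) / (4 * r)) *
            deriv (deriv f) θ := by
  have hr0 : r ≠ 0 := hr.ne'
  set a : ℂ := star ψ ⬝ᵥ (A *ᵥ ψ) with ha
  set b : ℂ := star ψ ⬝ᵥ ((G * A * G) *ᵥ ψ) with hb
  set d : ℂ := star ψ ⬝ᵥ ((A * G) *ᵥ ψ) with hd
  set g : ℂ := star ψ ⬝ᵥ ((G * A) *ᵥ ψ) with hg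
  set P : ℝ := (a.re + b.re / r ^ 2) / 2 with hP
  set Q : ℝ := (a.re - b.re / r ^ 2) / 2 with hQ
  set S : ℝ := (d.im - g.im) / (2 * r) with hS
  have hfe : f = fun t => P + Q * Real.cos (2 * r * t) + S * Real.sin (2 * r * t) := by
    funext t
    have hE1 := exp_IG G r hr0 hG2 t
    have hE2 : NormedSpace.exp ((-(Complex.I * (t : ℂ))) • G) =
        (Complex.cos ((r : ℂ) * t)) • (1 : Matrix (Fin n) (Fin n) ℂ) -
          (Complex.sin ((r : ℂ) * t) * Complex.I / (r : ℂ)) • G := by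
      have h0 : (-(Complex.I * (t : ℂ))) • G = (Complex.I * ((-t : ℝ) : ℂ)) • G := by
        push_cast; ring_nf
      rw [h0, exp_IG G r hr0 hG2 (-t)]
      push_cast
      rw [mul_neg, Complex.cos_neg, Complex.sin_neg]
      simp [neg_div, neg_smul, sub_eq_add_neg]
    rw [hf t, hE1, hE2]
    set c : ℂ := Complex.cos ((r : ℂ) * t) with hc
    set s : ℂ := Complex.sin ((r : ℂ) * t) * Complex.I / (r : ℂ) with hs
    have hM : (c • (1 : Matrix (Fin n) (Fin n) ℂ) + s • G) * A * (c • 1 - s • G) =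
        (c * c) • A + (c * s) • (G * A) - (c * s) • (A * G) - (s * s) • (G * A * G) := by
      simp only [Matrix.add_mul, Matrix.mul_sub, Matrix.smul_mul, Matrix.mul_smul,
        Matrix.one_mul, Matrix.mul_one, smul_smul, Matrix.mul_assoc]
      module
    rw [hM]
    simp only [Matrix.add_mulVec, Matrix.sub_mulVec, Matrix.smul_mulVec,
      dotProduct_add, dotProduct_sub, dotProduct_smul, smul_eq_mul, ← ha, ← hb, ← hd, ← hg,
      Matrix.mul_assoc]
    have hb' : star ψ ⬝ᵥ (G * (A * G)) *ᵥ ψ = b := by rw [hb, Matrix.mul_assoc]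
    rw [hb']
    have hcC : c = ((Real.cos (r * t) : ℝ) : ℂ) := by
      rw [hc, Complex.ofReal_cos]; norm_cast
    have hsC : s = ((Real.sin (r * t) / r : ℝ) : ℂ) * Complex.I := by
      rw [hs]; push_cast; ring
    rw [hcC, hsC, hP, hQ, hS]
    have h2 : (2 : ℝ) * r * t = 2 * (r * t) := by ring
    rw [h2, Real.cos_two_mul, Real.sin_two_mul]
    have hpy : Real.sin (r * t) ^ 2 = 1 - Real.cos (r * t) ^ 2 := by
      linarith [Real.sin_sq_add_cos_sq (r * t)]
    simp only [Complex.add_re, Complex.sub_re, Complex.mul_re, Complex.mul_im,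
      Complex.I_re, Complex.I_im, Complex.ofReal_re, Complex.ofReal_im]
    have hr2 : r^2 ≠ 0 := pow_ne_zero _ hr0
    field_simp
    linear_combination (2 * b.re) * hpy
  have hd1 : ∀ x : ℝ, HasDerivAt (fun u => P + Q * Real.cos (2 * r * u) + S * Real.sin (2 * r * u))
      (-(2 * r * Q) * Real.sin (2 * r * x) + 2 * r * S * Real.cos (2 * r * x)) x := by
    intro x
    have h2r : HasDerivAt (fun u : ℝ => 2 * r * u) (2 * r) x := by
      simpa using (hasDerivAt_id x).const_mul (2 * r)
    have hcd := (Real.hasDerivAt_cos (2 * r * x)).comp x h2r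
    have hsd := (Real.hasDerivAt_sin (2 * r * x)).comp x h2r
    have := ((hasDerivAt_const x P).add (hcd.const_mul Q)).add (hsd.const_mul S)
    refine this.congr_deriv ?_
    ring
  have hdf : deriv f = fun x => -(2 * r * Q) * Real.sin (2 * r * x) + 2 * r * S * Real.cos (2 * r * x) := by
    funext x
    rw [hfe]
    exact (hd1 x).deriv
  have hd2 : ∀ x : ℝ, HasDerivAt (fun u => -(2 * r * Q) * Real.sin (2 * r * u) + 2 * r * S * Real.cos (2 * r * u))
      (-(2 * r * Q) * (2 * r) * Real.cos (2 * r * x) - 2 * r * S * (2 * r) * Real.sin (2 * r * x)) x := by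
    intro x
    have h2r : HasDerivAt (fun u : ℝ => 2 * r * u) (2 * r) x := by
      simpa using (hasDerivAt_id x).const_mul (2 * r)
    have hcd := (Real.hasDerivAt_cos (2 * r * x)).comp x h2r
    have hsd := (Real.hasDerivAt_sin (2 * r * x)).comp x h2r
    have := (hsd.const_mul (-(2 * r * Q))).add (hcd.const_mul (2 * r * S))
    refine this.congr_deriv ?_
    ring
  have hddf : deriv (deriv f) θ =
      -(2 * r * Q) * (2 * r) * Real.cos (2 * r * θ) - 2 * r * S * (2 * r) * Real.sin (2 * r * θ) := by
    rw [hdf]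
    exact (hd2 θ).deriv
  rw [hddf, hdf, hfe]
  simp only
  have e1 : 2 * r * (θ + γ₁) = 2 * r * θ + 2 * r * γ₁ := by ring
  have e2 : 2 * r * (θ - γ₂) = 2 * r * θ - 2 * r * γ₂ := by ring
  rw [e1, e2, Real.cos_add, Real.sin_add, Real.cos_sub, Real.sin_sub]
  field_simp
  ring
end

section
/- Let f(θ) = ⟨ψ| e^{iθG} A e^{-iθG} |ψ⟩ with G² = r²I. Then for any γ ∈ ℝ with sin(2rγ) ≠ 0, the centered parameter shift rule holds exactly: f'(θ) = r·[f(θ + γ) - f(θ - γ)] / sin(2rγ). -/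
open Matrix

theorem expG_formula {n : ℕ} (G : Matrix (Fin n) (Fin n) ℂ) (r : ℝ) (hr : 0 < r)
    (hG2 : G * G = ((r : ℂ) ^ 2) • (1 : Matrix (Fin n) (Fin n) ℂ)) (t : ℝ) :
    NormedSpace.exp ((Complex.I * (t : ℂ)) • G) =
      ((Real.cos (r * t) : ℝ) : ℂ) • (1 : Matrix (Fin n) (Fin n) ℂ) +
      (Complex.I * ((Real.sin (r * t) / r : ℝ) : ℂ)) • G := by
  have hrc : (r : ℂ) ≠ 0 := Complex.ofReal_ne_zero.mpr hr.ne'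
  have hpow : ∀ k : ℕ, G ^ (2 * k) = (((r : ℂ) ^ 2) ^ k) • 1 ∧
      G ^ (2 * k + 1) = (((r : ℂ) ^ 2) ^ k) • G := by
    intro k
    induction k with
    | zero => simp
    | succ k ih =>
      have h1 : G ^ (2 * (k + 1)) = (((r : ℂ) ^ 2) ^ (k + 1)) • 1 := by
        rw [show 2 * (k + 1) = (2 * k + 1) + 1 by ring, pow_succ, ih.2, smul_mul_assoc, hG2,
          smul_smul, ← pow_succ]
      refine ⟨h1, ?_⟩
      rw [pow_succ, h1, smul_mul_assoc, one_mul]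
  rw [NormedSpace.exp_eq_tsum (𝕂 := ℂ)]
  refine HasSum.tsum_eq ?_
  have hc := Complex.hasSum_cos' ((r * t : ℝ) : ℂ)
  have hs := Complex.hasSum_sin' ((r * t : ℝ) : ℂ)
  rw [← Complex.ofReal_cos] at hc
  rw [← Complex.ofReal_sin] at hs
  refine HasSum.even_add_odd ?_ ?_
  · have heven : (fun k => ((((2 * k).factorial : ℂ))⁻¹ • ((Complex.I * (t : ℂ)) • G) ^ (2 * k))) =
        fun k => ((((r * t : ℝ) : ℂ) * Complex.I) ^ (2 * k) / (((2 * k).factorial : ℂ))) •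
          (1 : Matrix (Fin n) (Fin n) ℂ) := by
      funext k
      rw [smul_pow, (hpow k).1, smul_smul, smul_smul]
      congr 1
      have hfac : ((((2 * k).factorial : ℂ))) ≠ 0 := Nat.cast_ne_zero.mpr (Nat.factorial_ne_zero _)
      field_simp
      push_cast
      ring
    rw [heven]
    exact hc.smul_const 1
  · have hodd : (fun k => ((((2 * k + 1).factorial : ℂ))⁻¹ • ((Complex.I * (t : ℂ)) • G) ^ (2 * k + 1))) =
        fun k => (((((r * t : ℝ) : ℂ) * Complex.I) ^ (2 * k + 1) / (((2 * k + 1).factorial : ℂ)) /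
          Complex.I * Complex.I / (r : ℂ))) • G := by
      funext k
      rw [smul_pow, (hpow k).2, smul_smul, smul_smul]
      congr 1
      have hfac : ((((2 * k + 1).factorial : ℂ))) ≠ 0 := Nat.cast_ne_zero.mpr (Nat.factorial_ne_zero _)
      field_simp
      push_cast
      ring
    rw [hodd]
    have := ((hs.mul_right Complex.I).div_const (r : ℂ)).smul_const G
    convert this using 2
    case e'_3 => rfl
    push_cast
    ring

theorem stmt_3 {n : ℕ} (ψ : Fin n → ℂ) (hψ : star ψ ⬝ᵥ ψ = 1)
    (A G : Matrix (Fin n) (Fin n) ℂ) (hA : A.IsHermitian) (hG : G.IsHermitian)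
    (r : ℝ) (hr : 0 < r)
    (hG2 : G * G = ((r : ℂ) ^ 2) • (1 : Matrix (Fin n) (Fin n) ℂ))
    (f : ℝ → ℝ)
    (hf : ∀ θ : ℝ, f θ =
      (star ψ ⬝ᵥ ((NormedSpace.exp ((Complex.I * (θ : ℂ)) • G) * A *
        NormedSpace.exp ((-(Complex.I * (θ : ℂ))) • G)) *ᵥ ψ)).re) (θ γ : ℝ) (hγ : Real.sin (2 * r * γ) ≠ 0) :
    deriv f θ = r * (f (θ + γ) - f (θ - γ)) / Real.sin (2 * r * γ) := by
  have hrne : r ≠ 0 := hr.ne'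
  set a0 : ℂ := star ψ ⬝ᵥ (A *ᵥ ψ) with ha0
  set aG : ℂ := star ψ ⬝ᵥ ((G * A) *ᵥ ψ) with haG
  set aAG : ℂ := star ψ ⬝ᵥ ((A * G) *ᵥ ψ) with haAG
  set a1 : ℂ := star ψ ⬝ᵥ ((G * A * G) *ᵥ ψ) with ha1
  have hexpand : ∀ c s : ℂ,
      star ψ ⬝ᵥ (((c • (1 : Matrix (Fin n) (Fin n) ℂ) + s • G) * A *
        (c • (1 : Matrix (Fin n) (Fin n) ℂ) - s • G)) *ᵥ ψ)
      = c * c * a0 + (c * s) * aG - (c * s) * aAG - (s * s) * a1 := by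
    intro c s
    rw [ha0, haG, haAG, ha1]
    simp only [Matrix.add_mul, Matrix.mul_sub, Matrix.smul_mul, Matrix.mul_smul,
      Matrix.one_mul, Matrix.mul_one, Matrix.add_mulVec, Matrix.sub_mulVec,
      Matrix.smul_mulVec, dotProduct_add, dotProduct_sub, dotProduct_smul,
      smul_smul, smul_eq_mul, Matrix.mul_assoc]
    ring
  have key : ∀ t : ℝ, f t = a0.re * Real.cos (r * t) ^ 2 + (a1.re / r ^ 2) * Real.sin (r * t) ^ 2
      + ((aAG.im - aG.im) / r) * (Real.sin (r * t) * Real.cos (r * t)) := by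
    intro t
    have e1 := expG_formula G r hr hG2 t
    have e2 : NormedSpace.exp ((-(Complex.I * (t : ℂ))) • G) =
        ((Real.cos (r * t) : ℝ) : ℂ) • (1 : Matrix (Fin n) (Fin n) ℂ) -
        (Complex.I * ((Real.sin (r * t) / r : ℝ) : ℂ)) • G := by
      have h := expG_formula G r hr hG2 (-t)
      have hsc : (Complex.I * ((-t : ℝ) : ℂ)) = -(Complex.I * (t : ℂ)) := by push_cast; ring
      rw [hsc] at h
      rw [h]
      rw [mul_neg, Real.cos_neg, Real.sin_neg, neg_div]
      push_cast
      rw [mul_neg, neg_smul, sub_eq_add_neg]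
    rw [hf t, e1, e2, hexpand]
    simp only [Complex.add_re, Complex.sub_re, Complex.mul_re, Complex.mul_im,
      Complex.I_re, Complex.I_im, Complex.ofReal_re, Complex.ofReal_im]
    field_simp
    ring
  have hid : HasDerivAt (fun t : ℝ => r * t) r θ := by
    simpa using (hasDerivAt_id θ).const_mul r
  have hcos : HasDerivAt (fun t : ℝ => Real.cos (r * t)) (-Real.sin (r * θ) * r) θ :=
    (Real.hasDerivAt_cos (r * θ)).comp θ hid
  have hsin : HasDerivAt (fun t : ℝ => Real.sin (r * t)) (Real.cos (r * θ) * r) θ :=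
    (Real.hasDerivAt_sin (r * θ)).comp θ hid
  have hD := (((hcos.pow 2).const_mul a0.re).add
    ((hsin.pow 2).const_mul (a1.re / r ^ 2))).add
    ((hsin.mul hcos).const_mul ((aAG.im - aG.im) / r))
  have hfeq : f = fun t : ℝ => a0.re * Real.cos (r * t) ^ 2
      + (a1.re / r ^ 2) * Real.sin (r * t) ^ 2
      + ((aAG.im - aG.im) / r) * (Real.sin (r * t) * Real.cos (r * t)) := funext key
  rw [hfeq, (show HasDerivAt (fun t : ℝ => a0.re * Real.cos (r * t) ^ 2
      + (a1.re / r ^ 2) * Real.sin (r * t) ^ 2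
      + ((aAG.im - aG.im) / r) * (Real.sin (r * t) * Real.cos (r * t))) _ θ from hD).deriv]
  rw [eq_div_iff hγ]
  push_cast
  rw [show 2 * r * γ = 2 * (r * γ) by ring, Real.sin_two_mul,
    mul_add r θ γ, mul_sub r θ γ, Real.cos_add, Real.sin_add, Real.cos_sub, Real.sin_sub]
  field_simp
  ring
end

section
/- Let f(θ) = ⟨ψ| e^{iθG} A e^{-iθG} |ψ⟩ with G Hermitian and G² = r²I, A Hermitian. Then f satisfies the differential equation f'''(θ) = -4r²·f'(θ) for all θ; consequently for every n ∈ ℕ, f^{(n+2)} = -4r²·f^{(n)} holds for all derivatives of order n ≥ 1. -/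
open Matrix

lemma derivCS (k β γ : ℝ) :
    deriv (fun θ : ℝ => β * Real.cos (k*θ) + γ * Real.sin (k*θ)) =
      fun θ : ℝ => (k*γ) * Real.cos (k*θ) + (-(k*β)) * Real.sin (k*θ) := by
  funext θ
  have hk : HasDerivAt (fun θ : ℝ => k*θ) k θ := by
    simpa using (hasDerivAt_id θ).const_mul k
  have hcos : HasDerivAt (fun θ : ℝ => Real.cos (k*θ)) (-Real.sin (k*θ) * k) θ :=
    (Real.hasDerivAt_cos (k*θ)).comp θ hk
  have hsin : HasDerivAt (fun θ : ℝ => Real.sin (k*θ)) (Real.cos (k*θ) * k) θ :=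
    (Real.hasDerivAt_sin (k*θ)).comp θ hk
  have := ((hcos.const_mul β).add (hsin.const_mul γ)).deriv
  rw [show (fun θ : ℝ => β * Real.cos (k*θ) + γ * Real.sin (k*θ)) = ((fun y => β * Real.cos (k * y)) + fun y => γ * Real.sin (k * y)) from rfl, this]; ring

lemma keyCS (k : ℝ) : ∀ (m : ℕ) (β γ : ℝ),
    iteratedDeriv (m+2) (fun θ : ℝ => β * Real.cos (k*θ) + γ * Real.sin (k*θ)) =
      fun θ : ℝ => -(k^2) *
        iteratedDeriv m (fun θ : ℝ => β * Real.cos (k*θ) + γ * Real.sin (k*θ)) θ := by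
  intro m
  induction m with
  | zero =>
    intro β γ
    rw [show (0+2 : ℕ) = 1+1 from rfl, iteratedDeriv_succ, iteratedDeriv_one, derivCS,
      derivCS, iteratedDeriv_zero]
    funext θ; ring
  | succ m ih =>
    intro β γ
    rw [show m+1+2 = (m+2)+1 from rfl, iteratedDeriv_succ', derivCS, ih,
      show m+1 = m+1 from rfl, iteratedDeriv_succ', derivCS]

lemma expG {n : ℕ} (G : Matrix (Fin n) (Fin n) ℂ) (r : ℝ) (hr : (r:ℂ) ≠ 0)
    (hG2 : G * G = ((r : ℂ) ^ 2) • (1 : Matrix (Fin n) (Fin n) ℂ)) (t : ℝ) :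
    NormedSpace.exp ((Complex.I * (t:ℂ)) • G) =
      Complex.cos ((r:ℂ)*(t:ℂ)) • (1 : Matrix (Fin n) (Fin n) ℂ) +
      (Complex.I * Complex.sin ((r:ℂ)*(t:ℂ)) / (r:ℂ)) • G := by
  have hpe : ∀ k : ℕ, G ^ (2*k) = ((r:ℂ)^(2*k)) • (1 : Matrix (Fin n) (Fin n) ℂ) := by
    intro k
    induction k with
    | zero => simp
    | succ k ih =>
      have h2 : 2*(k+1) = 2*k + 2 := by ring
      rw [h2, pow_add, ih, sq, hG2, smul_mul_assoc, one_mul, smul_smul, ← pow_add]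
  have hpo : ∀ k : ℕ, G ^ (2*k+1) = ((r:ℂ)^(2*k)) • G := by
    intro k
    rw [pow_succ, hpe, smul_mul_assoc, one_mul]
  have hs : HasSum (fun m : ℕ => (Nat.factorial m : ℂ)⁻¹ • ((Complex.I * (t:ℂ)) • G) ^ m)
      (Complex.cos ((r:ℂ)*(t:ℂ)) • (1 : Matrix (Fin n) (Fin n) ℂ) +
        (Complex.I * Complex.sin ((r:ℂ)*(t:ℂ)) / (r:ℂ)) • G) := by
    refine HasSum.even_add_odd ?_ ?_
    · have h := (Complex.hasSum_cos ((r:ℂ)*(t:ℂ))).smul_const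
        (1 : Matrix (Fin n) (Fin n) ℂ)
      convert h using 2 with k
      rw [smul_pow, hpe, smul_smul, smul_smul]
      congr 1
      have h2 : (Complex.I * (t:ℂ))^(2*k) * (r:ℂ)^(2*k) = (-1)^k * ((r:ℂ)*(t:ℂ))^(2*k) := by
        rw [pow_mul, pow_mul, pow_mul, ← mul_pow, ← mul_pow, ← mul_pow]
        congr 1
        rw [mul_pow, mul_pow, Complex.I_sq]; ring
      linear_combination (((2*k).factorial : ℂ))⁻¹ * h2
    · have h := (((Complex.hasSum_sin ((r:ℂ)*(t:ℂ))).mul_left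
        (Complex.I / (r:ℂ)))).smul_const G
      rw [show Complex.I / (r:ℂ) * Complex.sin ((r:ℂ)*(t:ℂ))
        = Complex.I * Complex.sin ((r:ℂ)*(t:ℂ)) / (r:ℂ) from by ring] at h
      convert h using 2 with k
      rw [smul_pow, hpo, smul_smul, smul_smul]
      congr 1
      have h2 : (Complex.I * (t:ℂ))^(2*k) * (r:ℂ)^(2*k) = (-1)^k * ((r:ℂ)*(t:ℂ))^(2*k) := by
        rw [pow_mul, pow_mul, pow_mul, ← mul_pow, ← mul_pow, ← mul_pow]
        congr 1
        rw [mul_pow, mul_pow, Complex.I_sq]; ring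
      have h3 : (Complex.I * (t:ℂ))^(2*k) * (r:ℂ)^(2*k) * (Complex.I * (t:ℂ)) * (r:ℂ)
          = Complex.I * ((-1)^k * ((r:ℂ)*(t:ℂ))^(2*k+1)) := by
        rw [pow_succ]
        linear_combination (Complex.I * (t:ℂ) * (r:ℂ)) * h2
      have hfac : (((2*k+1).factorial : ℕ) : ℂ) ≠ 0 := Nat.cast_ne_zero.2 (Nat.factorial_ne_zero _)
      field_simp
      rw [pow_succ]
      linear_combination h3
  rw [NormedSpace.exp_eq_tsum ℂ]
  exact hs.tsum_eq

theorem stmt_5 {n : ℕ} (ψ : Fin n → ℂ) (hψ : star ψ ⬝ᵥ ψ = 1)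
    (A G : Matrix (Fin n) (Fin n) ℂ) (hA : A.IsHermitian) (hG : G.IsHermitian)
    (r : ℝ) (hr : 0 < r)
    (hG2 : G * G = ((r : ℂ) ^ 2) • (1 : Matrix (Fin n) (Fin n) ℂ))
    (f : ℝ → ℝ)
    (hf : ∀ θ : ℝ, f θ =
      (star ψ ⬝ᵥ ((NormedSpace.exp ((Complex.I * (θ : ℂ)) • G) * A *
        NormedSpace.exp ((-(Complex.I * (θ : ℂ))) • G)) *ᵥ ψ)).re) :
    (∀ θ : ℝ, iteratedDeriv 3 f θ = -(4 * r ^ 2) * deriv f θ) ∧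
      ∀ m : ℕ, 1 ≤ m → ∀ θ : ℝ,
        iteratedDeriv (m + 2) f θ = -(4 * r ^ 2) * iteratedDeriv m f θ := by
  have hr0 : r ≠ 0 := ne_of_gt hr
  have hrC : (r:ℂ) ≠ 0 := by exact_mod_cast hr0
  set F : Matrix (Fin n) (Fin n) ℂ → ℂ := fun M => star ψ ⬝ᵥ (M *ᵥ ψ) with hF
  -- step 1 : f θ = a cos² + b cos sin + c sin²
  obtain ⟨a, b, c, hform⟩ : ∃ a b c : ℝ, ∀ θ : ℝ,
      f θ = a * Real.cos (r*θ)^2 + b * (Real.cos (r*θ) * Real.sin (r*θ))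
        + c * Real.sin (r*θ)^2 := by
    refine ⟨(F A).re, (Complex.I * (F (G*A) - F (A*G))).re / r, (F (G*A*G)).re / r^2, ?_⟩
    intro θ
    rw [hf θ]
    have h1 := expG G r hrC hG2 θ
    have h2 := expG G r hrC hG2 (-θ)
    rw [show (Complex.I * ((-θ : ℝ):ℂ)) = -(Complex.I * (θ:ℂ)) from by push_cast; ring,
      show ((r:ℂ) * ((-θ : ℝ):ℂ)) = -((r:ℂ)*(θ:ℂ)) from by push_cast; ring,
      Complex.cos_neg, Complex.sin_neg] at h2
    rw [h1, h2]
    set C : ℝ := Real.cos (r*θ) with hC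
    set S : ℝ := Real.sin (r*θ) with hS
    have hCc : Complex.cos ((r:ℂ)*(θ:ℂ)) = (C:ℂ) := by
      rw [hC]; push_cast [Complex.ofReal_cos]; norm_cast
    have hSc : Complex.sin ((r:ℂ)*(θ:ℂ)) = (S:ℂ) := by
      rw [hS]; push_cast [Complex.ofReal_sin]; norm_cast
    rw [hCc, hSc]
    set Y : ℝ := S / r with hY
    have hsY : Complex.I * (S:ℂ) / (r:ℂ) = (Y:ℂ) * Complex.I := by
      rw [hY]; push_cast; ring
    have hsY' : Complex.I * -(S:ℂ) / (r:ℂ) = -((Y:ℂ) * Complex.I) := by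
      rw [hY]; push_cast; ring
    rw [hsY, hsY']
    -- expand the matrix product
    have hexp : ((C:ℂ) • (1 : Matrix (Fin n) (Fin n) ℂ) + ((Y:ℂ) * Complex.I) • G) * A *
        ((C:ℂ) • (1 : Matrix (Fin n) (Fin n) ℂ) + (-((Y:ℂ) * Complex.I)) • G)
        = ((C:ℂ)*(C:ℂ)) • A + ((C:ℂ)*(-((Y:ℂ)*Complex.I))) • (A*G)
          + (((Y:ℂ)*Complex.I)*(C:ℂ)) • (G*A)
          + (((Y:ℂ)*Complex.I)*(-((Y:ℂ)*Complex.I))) • (G*A*G) := by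
      simp only [add_mul, mul_add, smul_mul_assoc, mul_smul_comm, smul_smul,
        one_mul, mul_one, Matrix.mul_assoc]
      module
    rw [hexp]
    have hlin : ∀ (x₁ x₂ x₃ x₄ : ℂ) (M₁ M₂ M₃ M₄ : Matrix (Fin n) (Fin n) ℂ),
        star ψ ⬝ᵥ ((x₁ • M₁ + x₂ • M₂ + x₃ • M₃ + x₄ • M₄) *ᵥ ψ)
          = x₁ * F M₁ + x₂ * F M₂ + x₃ * F M₃ + x₄ * F M₄ := by
      intro x₁ x₂ x₃ x₄ M₁ M₂ M₃ M₄
      simp [hF, Matrix.add_mulVec, Matrix.smul_mulVec, dotProduct_add,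
        dotProduct_smul, smul_eq_mul]
    rw [hlin]
    have hz : ((C:ℂ)*(C:ℂ)) * F A + ((C:ℂ)*(-((Y:ℂ)*Complex.I))) * F (A*G)
          + (((Y:ℂ)*Complex.I)*(C:ℂ)) * F (G*A)
          + (((Y:ℂ)*Complex.I)*(-((Y:ℂ)*Complex.I))) * F (G*A*G)
        = ((C^2 : ℝ):ℂ) * F A + ((C*Y : ℝ):ℂ) * (Complex.I * (F (G*A) - F (A*G)))
          + ((Y^2 : ℝ):ℂ) * F (G*A*G) := by
      push_cast
      linear_combination (-((Y:ℂ))^2 * F (G*A*G)) * Complex.I_sq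
    rw [hz]
    simp only [Complex.add_re, Complex.re_ofReal_mul]
    rw [hY]
    field_simp
  -- step 2 : f θ = α + β cos(2rθ) + γ sin(2rθ)
  obtain ⟨α, β, γ, hfam⟩ : ∃ α β γ : ℝ, ∀ θ : ℝ,
      f θ = α + (β * Real.cos ((2*r)*θ) + γ * Real.sin ((2*r)*θ)) := by
    refine ⟨a/2 + c/2, a/2 - c/2, b/2, ?_⟩
    intro θ
    rw [hform θ, show (2*r)*θ = 2*(r*θ) from by ring, Real.cos_two_mul, Real.sin_two_mul]
    have hs2 : Real.sin (r*θ)^2 = 1 - Real.cos (r*θ)^2 := Real.sin_sq (r*θ)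
    rw [hs2]; ring
  -- step 3 : derivatives
  set fam : ℝ → ℝ := fun θ => β * Real.cos ((2*r)*θ) + γ * Real.sin ((2*r)*θ) with hfamdef
  have hfe : f = fun θ => α + fam θ := funext hfam
  have hdf : deriv f = deriv fam := by
    funext θ
    rw [hfe]
    exact deriv_const_add α
  have hiter : ∀ m : ℕ, 1 ≤ m → iteratedDeriv m f = iteratedDeriv m fam := by
    intro m hm
    obtain ⟨m', rfl⟩ : ∃ m', m = m' + 1 := ⟨m - 1, by omega⟩
    rw [iteratedDeriv_succ', iteratedDeriv_succ', hdf]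
  have hk2 : -((2*r)^2) = -(4*r^2) := by ring
  constructor
  · intro θ
    have h3 := hiter 3 (by norm_num)
    have hkey := keyCS (2*r) 1 β γ
    rw [h3, hfamdef]
    rw [show iteratedDeriv 3 = iteratedDeriv (1+2) from rfl, hkey]
    rw [iteratedDeriv_one, hk2, ← hfamdef, ← hdf]
  · intro m hm θ
    have h1 := hiter (m+2) (by omega)
    have h2 := hiter m hm
    rw [h1, h2, hfamdef, keyCS (2*r) m β γ, hk2, ← hfamdef]
end

section
/- Let f(θ) = ⟨ψ| e^{iθG} A e^{-iθG} |ψ⟩ with G Hermitian, G² = r²I, A Hermitian. Then there exist real constants a, b, c such that f(θ) = a + b·sin(2rθ) + c·cos(2rθ) for all θ. -/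
open Matrix

lemma exp_smul_aux {n : ℕ} (G : Matrix (Fin n) (Fin n) ℂ) (r : ℝ) (hr : r ≠ 0)
    (hG2 : G * G = ((r : ℂ) ^ 2) • (1 : Matrix (Fin n) (Fin n) ℂ)) (θ : ℝ) :
    NormedSpace.exp ((Complex.I * (θ : ℂ)) • G) =
      (Complex.cos (r * θ)) • (1 : Matrix (Fin n) (Fin n) ℂ)
        + (Complex.I * Complex.sin (r * θ) / r) • G := by
  have hr' : (r : ℂ) ≠ 0 := by exact_mod_cast hr
  have hpow_even : ∀ k : ℕ, G ^ (2 * k) = (((r:ℂ)^2)^k) • (1 : Matrix (Fin n) (Fin n) ℂ) := by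
    intro k
    rw [pow_mul, pow_two, hG2, smul_pow, one_pow]
  have key : HasSum (fun m : ℕ => ((Nat.factorial m : ℂ))⁻¹ • ((Complex.I * (θ : ℂ)) • G) ^ m)
      ((Complex.cos (r * θ)) • (1 : Matrix (Fin n) (Fin n) ℂ)
        + (Complex.I * Complex.sin (r * θ) / r) • G) := by
    refine HasSum.even_add_odd ?_ ?_
    · have h := (Complex.hasSum_cos ((r : ℂ) * θ)).smul_const (1 : Matrix (Fin n) (Fin n) ℂ)
      convert h using 2 with k
      rw [smul_pow, hpow_even k, smul_smul, smul_smul]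
      congr 1
      rw [mul_pow, pow_mul, Complex.I_sq, mul_pow]
      have h0 : ((2 * k).factorial : ℂ) ≠ 0 := Nat.cast_ne_zero.mpr (2 * k).factorial_ne_zero
      field_simp
      ring
    · have h := (((Complex.hasSum_sin ((r : ℂ) * θ)).mul_left
        (Complex.I / r)).smul_const G)
      have h2 : (Complex.I / (r:ℂ) * Complex.sin ((r:ℂ) * (θ:ℂ)))
          = Complex.I * Complex.sin ((r:ℂ) * (θ:ℂ)) / (r:ℂ) := by ring
      rw [h2] at h
      convert h using 2 with k
      rw [smul_pow, pow_succ G, hpow_even k, Matrix.smul_mul, Matrix.one_mul, smul_smul, smul_smul]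
      congr 1
      have h1 : (Complex.I * (θ:ℂ)) ^ (2 * k + 1) = (-1 : ℂ) ^ k * Complex.I * (θ:ℂ) ^ (2*k+1) := by
        rw [mul_pow, pow_succ Complex.I, pow_mul, Complex.I_sq]
      rw [h1, mul_pow, ← pow_mul]
      have h0 : ((2 * k + 1).factorial : ℂ) ≠ 0 := Nat.cast_ne_zero.mpr (2 * k + 1).factorial_ne_zero
      field_simp
      ring
  rw [NormedSpace.exp_eq_tsum (𝕂 := ℂ)]
  exact key.tsum_eq

theorem stmt_6 {n : ℕ} (ψ : Fin n → ℂ) (hψ : star ψ ⬝ᵥ ψ = 1)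
    (A G : Matrix (Fin n) (Fin n) ℂ) (hA : A.IsHermitian) (hG : G.IsHermitian)
    (r : ℝ) (hr : 0 < r)
    (hG2 : G * G = ((r : ℂ) ^ 2) • (1 : Matrix (Fin n) (Fin n) ℂ))
    (f : ℝ → ℝ)
    (hf : ∀ θ : ℝ, f θ =
      (star ψ ⬝ᵥ ((NormedSpace.exp ((Complex.I * (θ : ℂ)) • G) * A *
        NormedSpace.exp ((-(Complex.I * (θ : ℂ))) • G)) *ᵥ ψ)).re) :
    ∃ a b c : ℝ, ∀ θ : ℝ,
      f θ = a + b * Real.sin (2 * r * θ) + c * Real.cos (2 * r * θ) := by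
  have hrne : r ≠ 0 := ne_of_gt hr
  -- quadratic form conjugation
  have hquad : ∀ M : Matrix (Fin n) (Fin n) ℂ,
      star (star ψ ⬝ᵥ (M *ᵥ ψ)) = star ψ ⬝ᵥ (Mᴴ *ᵥ ψ) := by
    intro M
    rw [← Matrix.star_dotProduct_star, star_star, Matrix.star_mulVec,
      ← Matrix.dotProduct_mulVec]
  set z := star ψ ⬝ᵥ ((A * G) *ᵥ ψ) with hzdef
  set α := (star ψ ⬝ᵥ (A *ᵥ ψ)).re with hαdef
  set γ := (star ψ ⬝ᵥ ((G * A * G) *ᵥ ψ)).re with hγdef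
  have hA' : star ψ ⬝ᵥ (A *ᵥ ψ) = (α : ℂ) := by
    have h := hquad A
    rw [hA] at h
    exact (Complex.conj_eq_iff_re.mp h).symm
  have hGAG' : star ψ ⬝ᵥ ((G * A * G) *ᵥ ψ) = (γ : ℂ) := by
    have hherm : (G * A * G)ᴴ = G * A * G := by
      rw [Matrix.conjTranspose_mul, Matrix.conjTranspose_mul, hA, hG, Matrix.mul_assoc]
    have h := hquad (G * A * G)
    rw [hherm] at h
    exact (Complex.conj_eq_iff_re.mp h).symm
  have hGA' : star ψ ⬝ᵥ ((G * A) *ᵥ ψ) = star z := by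
    have h := hquad (A * G)
    rw [Matrix.conjTranspose_mul, hA, hG] at h
    rw [← h, hzdef]
  refine ⟨(α + γ / r ^ 2) / 2, z.im / r, (α - γ / r ^ 2) / 2, ?_⟩
  intro θ
  have hexp1 := exp_smul_aux G r hrne hG2 θ
  have hexp2 : NormedSpace.exp ((-(Complex.I * (θ : ℂ))) • G)
      = (Complex.cos ((r : ℂ) * (θ : ℂ))) • (1 : Matrix (Fin n) (Fin n) ℂ)
        - (Complex.I * Complex.sin ((r : ℂ) * (θ : ℂ)) / r) • G := by
    have h := exp_smul_aux G r hrne hG2 (-θ)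
    have e1 : (Complex.I * ((-θ : ℝ) : ℂ)) • G = (-(Complex.I * (θ : ℂ))) • G := by
      push_cast; ring_nf
    have e2 : ((r : ℂ) * ((-θ : ℝ) : ℂ)) = -((r : ℂ) * (θ : ℂ)) := by push_cast; ring
    rw [e1, e2, Complex.cos_neg, Complex.sin_neg] at h
    rw [h, sub_eq_add_neg, ← neg_smul]
    congr 1
    ring
  rw [hf θ, hexp1, hexp2]
  set cc := Complex.cos ((r : ℂ) * (θ : ℂ)) with hccdef
  set s := Complex.I * Complex.sin ((r : ℂ) * (θ : ℂ)) / (r : ℂ) with hsdef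
  have hmv : star ψ ⬝ᵥ (((cc • (1 : Matrix (Fin n) (Fin n) ℂ) + s • G) * A *
      (cc • (1 : Matrix (Fin n) (Fin n) ℂ) - s • G)) *ᵥ ψ)
      = cc * cc * (star ψ ⬝ᵥ (A *ᵥ ψ)) - cc * s * z + s * cc * star z
        - s * s * (star ψ ⬝ᵥ ((G * A * G) *ᵥ ψ)) := by
    rw [← hGA', hzdef]
    simp only [Matrix.add_mul, Matrix.mul_sub, Matrix.sub_mul, Matrix.mul_add,
      Matrix.smul_mul, Matrix.mul_smul, Matrix.one_mul, Matrix.mul_one, smul_smul,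
      Matrix.add_mulVec, Matrix.sub_mulVec, Matrix.smul_mulVec,
      dotProduct_add, dotProduct_sub, dotProduct_smul, smul_eq_mul, Matrix.mul_assoc]
    ring
  rw [hmv, hA', hGAG']
  -- now a purely scalar computation
  have hcc : cc = ((Real.cos (r * θ) : ℝ) : ℂ) := by
    rw [hccdef, Complex.ofReal_cos, Complex.ofReal_mul]
  have hss : Complex.sin ((r : ℂ) * (θ : ℂ)) = ((Real.sin (r * θ) : ℝ) : ℂ) := by
    rw [Complex.ofReal_sin, Complex.ofReal_mul]
  set cr := Real.cos (r * θ) with hcrdef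
  set sr := Real.sin (r * θ) with hsrdef
  have hz : star z = z - 2 * z.im * Complex.I := by
    have h := Complex.sub_conj z
    push_cast at h
    rw [RCLike.star_def]
    linear_combination -h
  have key : cc * cc * (α : ℂ) - cc * s * z + s * cc * star z - s * s * (γ : ℂ)
      = ((cr ^ 2 * α + 2 * cr * (sr / r) * z.im + (sr / r) ^ 2 * γ : ℝ) : ℂ) := by
    rw [hz, hcc, hsdef, hss]
    push_cast
    linear_combination (-2 * (z.im : ℂ) * (sr / r : ℂ) * (cr : ℂ)
      - ((sr : ℂ) / r) ^ 2 * (γ : ℂ)) * Complex.I_sq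
  rw [key, Complex.ofReal_re]
  have h1 : Real.sin (2 * r * θ) = 2 * sr * cr := by
    rw [show 2 * r * θ = 2 * (r * θ) by ring, Real.sin_two_mul, hsrdef, hcrdef]
  have h2 : Real.cos (2 * r * θ) = 2 * cr ^ 2 - 1 := by
    rw [show 2 * r * θ = 2 * (r * θ) by ring, Real.cos_two_mul, hcrdef]
  have h3 : sr ^ 2 = 1 - cr ^ 2 := by
    rw [hsrdef, hcrdef, Real.sin_sq]
  rw [h1, h2, div_pow, h3]
  field_simp
  ring
end

section
/- Let f(θ) = ⟨ψ| e^{iθG} A e^{-iθG} |ψ⟩ with G² = r²I, and let |φ(θ)⟩ = e^{-iθG}|ψ⟩. Then ⟨φ(θ)| G A G |φ(θ)⟩ / r² = f(θ + π/(2r)) for all θ. -/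
open Matrix
open scoped Nat

lemma exp_smul_of_sq_one {m : ℕ} (J : Matrix (Fin m) (Fin m) ℂ) (hJ : J * J = 1) (w : ℂ) :
    NormedSpace.exp (w • J) =
      Complex.cosh w • (1 : Matrix (Fin m) (Fin m) ℂ) + Complex.sinh w • J := by
  have heven : ∀ k : ℕ, (((2 * k)! : ℂ))⁻¹ • (w • J) ^ (2 * k)
      = (w ^ (2 * k) / ((2 * k)! : ℂ)) • (1 : Matrix (Fin m) (Fin m) ℂ) := by
    intro k
    rw [smul_pow, pow_mul J, sq, hJ, one_pow, smul_smul, inv_mul_eq_div]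
  have hodd : ∀ k : ℕ, (((2 * k + 1)! : ℂ))⁻¹ • (w • J) ^ (2 * k + 1)
      = (w ^ (2 * k + 1) / ((2 * k + 1)! : ℂ)) • J := by
    intro k
    rw [smul_pow, pow_succ J, pow_mul J, sq, hJ, one_pow, one_mul, smul_smul, inv_mul_eq_div]
  rw [NormedSpace.exp_eq_tsum ℂ]
  refine HasSum.tsum_eq (HasSum.even_add_odd ?_ ?_)
  · simpa only [heven] using
      (Complex.hasSum_cosh w).smul_const (1 : Matrix (Fin m) (Fin m) ℂ)
  · simpa only [hodd] using (Complex.hasSum_sinh w).smul_const J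

lemma exp_smul_of_sq {m : ℕ} (G : Matrix (Fin m) (Fin m) ℂ) (r : ℝ) (hr : 0 < r)
    (hG2 : G * G = ((r : ℂ) ^ 2) • (1 : Matrix (Fin m) (Fin m) ℂ)) (z : ℂ) :
    NormedSpace.exp (z • G) =
      Complex.cosh (z * r) • (1 : Matrix (Fin m) (Fin m) ℂ)
        + (Complex.sinh (z * r) * (r : ℂ)⁻¹) • G := by
  have hr0 : (r : ℂ) ≠ 0 := by exact_mod_cast hr.ne'
  set J : Matrix (Fin m) (Fin m) ℂ := (r : ℂ)⁻¹ • G with hJdef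
  have hJ : J * J = 1 := by
    rw [hJdef, Matrix.smul_mul, Matrix.mul_smul, hG2, smul_smul, smul_smul,
      show (r : ℂ)⁻¹ * (r:ℂ)⁻¹ * (r:ℂ)^2 = 1 by field_simp, one_smul]
  have hzG : z • G = (z * r) • J := by
    rw [hJdef, smul_smul, mul_assoc, mul_inv_cancel₀ hr0, mul_one]
  rw [hzG, exp_smul_of_sq_one J hJ, hJdef, smul_smul]

theorem stmt_10 {n : ℕ} (ψ : Fin n → ℂ) (hψ : star ψ ⬝ᵥ ψ = 1)
    (A G : Matrix (Fin n) (Fin n) ℂ) (hA : A.IsHermitian) (hG : G.IsHermitian)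
    (r : ℝ) (hr : 0 < r)
    (hG2 : G * G = ((r : ℂ) ^ 2) • (1 : Matrix (Fin n) (Fin n) ℂ))
    (f : ℝ → ℝ)
    (hf : ∀ θ : ℝ, f θ =
      (star ψ ⬝ᵥ ((NormedSpace.exp ((Complex.I * (θ : ℂ)) • G) * A *
        NormedSpace.exp ((-(Complex.I * (θ : ℂ))) • G)) *ᵥ ψ)).re) (θ : ℝ) :
    (star (NormedSpace.exp ((-(Complex.I * (θ : ℂ))) • G) *ᵥ ψ) ⬝ᵥ
        ((G * A * G) *ᵥ
          (NormedSpace.exp ((-(Complex.I * (θ : ℂ))) • G) *ᵥ ψ))).re / r ^ 2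
      = f (θ + Real.pi / (2 * r)) := by
  have hr0 : (r : ℂ) ≠ 0 := by exact_mod_cast hr.ne'
  set c : ℝ := Real.pi / (2 * r) with hc
  set M : Matrix (Fin n) (Fin n) ℂ := NormedSpace.exp ((-(Complex.I * (θ : ℂ))) • G) with hM
  have hcrR : c * r = Real.pi / 2 := by
    rw [hc]; field_simp
  have hcr : ((c : ℂ)) * r = ((Real.pi / 2 : ℝ) : ℂ) := by
    rw [← Complex.ofReal_mul, hcrR]
  have hcoshp : Complex.cosh (Complex.I * (c : ℂ) * r) = 0 := by
    rw [mul_assoc, hcr, mul_comm, Complex.cosh_mul_I, ← Complex.ofReal_cos,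
      Real.cos_pi_div_two, Complex.ofReal_zero]
  have hsinhp : Complex.sinh (Complex.I * (c : ℂ) * r) = Complex.I := by
    rw [mul_assoc, hcr, mul_comm, Complex.sinh_mul_I, ← Complex.ofReal_sin,
      Real.sin_pi_div_two, Complex.ofReal_one, one_mul]
  have hexpP : NormedSpace.exp ((Complex.I * (c : ℂ)) • G) = (Complex.I * (r:ℂ)⁻¹) • G := by
    rw [exp_smul_of_sq G r hr hG2, hcoshp, hsinhp, zero_smul, zero_add]
  have hexpM : NormedSpace.exp ((-(Complex.I * (c : ℂ))) • G)
      = (-Complex.I * (r:ℂ)⁻¹) • G := by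
    rw [exp_smul_of_sq G r hr hG2, neg_mul, Complex.cosh_neg, Complex.sinh_neg, hcoshp, hsinhp,
      zero_smul, zero_add, neg_mul]
  have hMH : Mᴴ = NormedSpace.exp ((Complex.I * (θ : ℂ)) • G) := by
    rw [hM, ← Matrix.exp_conjTranspose, Matrix.conjTranspose_smul, hG.eq]
    congr 1
    simp [Complex.ext_iff]
  have hcomm : ∀ z w : ℂ, Commute (z • G) (w • G) :=
    fun z w => ((Commute.refl G).smul_left z).smul_right w
  have hsplitM : NormedSpace.exp ((-(Complex.I * ((θ + c : ℝ) : ℂ))) • G)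
      = ((-Complex.I * (r:ℂ)⁻¹) • G) * M := by
    have h : (-(Complex.I * ((θ + c : ℝ) : ℂ))) • G
        = (-(Complex.I * (c : ℂ))) • G + (-(Complex.I * (θ : ℂ))) • G := by
      rw [← add_smul]; congr 1; push_cast; ring
    rw [h, Matrix.exp_add_of_commute _ _ (hcomm _ _), hexpM, hM]
  have hsplitP : NormedSpace.exp ((Complex.I * ((θ + c : ℝ) : ℂ)) • G)
      = Mᴴ * ((Complex.I * (r:ℂ)⁻¹) • G) := by
    have h : (Complex.I * ((θ + c : ℝ) : ℂ)) • G
        = (Complex.I * (θ : ℂ)) • G + (Complex.I * (c : ℂ)) • G := by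
      rw [← add_smul]; congr 1; push_cast; ring
    rw [h, Matrix.exp_add_of_commute _ _ (hcomm _ _), hexpP, hMH]
  have hkey : NormedSpace.exp ((Complex.I * ((θ + c : ℝ) : ℂ)) • G) * A *
      NormedSpace.exp ((-(Complex.I * ((θ + c : ℝ) : ℂ))) • G)
      = (((r:ℂ) ^ 2)⁻¹) • (Mᴴ * (G * A * G) * M) := by
    rw [hsplitP, hsplitM]
    simp only [Matrix.smul_mul, Matrix.mul_smul, smul_smul, Matrix.mul_assoc]
    congr 1
    rw [show -Complex.I * (r:ℂ)⁻¹ * (Complex.I * (r:ℂ)⁻¹)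
        = -(Complex.I * Complex.I) * ((r:ℂ)⁻¹ * (r:ℂ)⁻¹) from by ring,
      Complex.I_mul_I, neg_neg, one_mul, ← mul_inv, ← sq]
  have hS : star (M *ᵥ ψ) ⬝ᵥ ((G * A * G) *ᵥ (M *ᵥ ψ))
      = star ψ ⬝ᵥ ((Mᴴ * (G * A * G) * M) *ᵥ ψ) := by
    rw [star_mulVec, ← dotProduct_mulVec, mulVec_mulVec, mulVec_mulVec, Matrix.mul_assoc,
      Matrix.mul_assoc]
  rw [hf (θ + c), hkey, smul_mulVec, dotProduct_smul, smul_eq_mul,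
    show ((r:ℂ)^2)⁻¹ = (((r^2)⁻¹ : ℝ) : ℂ) by push_cast; ring,
    Complex.re_ofReal_mul, ← hS, div_eq_inv_mul]
end

section
/- Fix r > 0 and 0 < γ < π/r. There is no function g: ℝ × ℝ → ℝ such that for every unit vector ψ ∈ ℂ² and all Hermitian 2×2 matrices A and G with G² = r²I, the function f(θ) = ⟨ψ| e^{iθG} A e^{-iθG} |ψ⟩ satisfies g(f(θ), f(θ+γ)) = f'(θ) for all θ ∈ [0, π/r). (No-go theorem for forward/backward parameter shift rules.) -/
open Matrix

theorem stmt_12 (r γ : ℝ) (hr : 0 < r) (hγ : 0 < γ) (hγ' : γ < Real.pi / r) :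
    ¬ ∃ g : ℝ → ℝ → ℝ,
      ∀ (ψ : Fin 2 → ℂ), star ψ ⬝ᵥ ψ = 1 →
      ∀ (A G : Matrix (Fin 2) (Fin 2) ℂ), A.IsHermitian → G.IsHermitian →
        G * G = ((r : ℂ) ^ 2) • (1 : Matrix (Fin 2) (Fin 2) ℂ) →
      ∀ f : ℝ → ℝ,
        (∀ θ : ℝ, f θ =
          (star ψ ⬝ᵥ ((NormedSpace.exp ((Complex.I * (θ : ℂ)) • G) * A *
            NormedSpace.exp ((-(Complex.I * (θ : ℂ))) • G)) *ᵥ ψ)).re) →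
      ∀ θ : ℝ, 0 ≤ θ → θ < Real.pi / r →
        g (f θ) (f (θ + γ)) = deriv f θ := by
  rintro ⟨g, hg⟩
  have hπr : 0 < Real.pi / r := lt_trans hγ hγ'
  set G : Matrix (Fin 2) (Fin 2) ℂ := Matrix.diagonal ![(r:ℂ), -r] with hGdef
  have hGherm : G.IsHermitian := by
    rw [Matrix.IsHermitian, hGdef, Matrix.diagonal_conjTranspose]
    apply congrArg Matrix.diagonal
    funext i; fin_cases i <;> simp
  have hGsq : G * G = ((r:ℂ)^2) • (1 : Matrix (Fin 2) (Fin 2) ℂ) := by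
    rw [hGdef, Matrix.diagonal_mul_diagonal, Matrix.smul_one_eq_diagonal]
    apply congrArg Matrix.diagonal
    funext i; fin_cases i <;> simp <;> ring
  have hexp : ∀ θ : ℝ, NormedSpace.exp ((Complex.I * (θ:ℂ)) • G)
      = Matrix.diagonal ![Complex.exp (((r*θ:ℝ):ℂ) * Complex.I),
          Complex.exp ((-(r*θ:ℝ):ℂ) * Complex.I)] := by
    intro θ
    rw [show (Complex.I * (θ:ℂ)) • G
        = Matrix.diagonal ![((r*θ:ℝ):ℂ) * Complex.I, (-(r*θ:ℝ):ℂ) * Complex.I] by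
      rw [hGdef, ← Matrix.diagonal_smul]
      apply congrArg Matrix.diagonal
      funext i
      fin_cases i <;> · simp; push_cast; ring]
    rw [Matrix.exp_diagonal,
      show NormedSpace.exp ![((r*θ:ℝ):ℂ) * Complex.I, (-(r*θ:ℝ):ℂ) * Complex.I]
        = ![Complex.exp (((r*θ:ℝ):ℂ) * Complex.I), Complex.exp ((-(r*θ:ℝ):ℂ) * Complex.I)] by
      funext i; fin_cases i <;> simp [Pi.coe_exp, ← Complex.exp_eq_exp_ℂ]]
  have hexp' : ∀ θ : ℝ, NormedSpace.exp ((-(Complex.I * (θ:ℂ))) • G)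
      = Matrix.diagonal ![Complex.exp ((-(r*θ:ℝ):ℂ) * Complex.I),
          Complex.exp (((r*θ:ℝ):ℂ) * Complex.I)] := by
    intro θ
    rw [show (-(Complex.I * (θ:ℂ))) • G
        = Matrix.diagonal ![(-(r*θ:ℝ):ℂ) * Complex.I, ((r*θ:ℝ):ℂ) * Complex.I] by
      rw [hGdef, ← Matrix.diagonal_smul]
      apply congrArg Matrix.diagonal
      funext i
      fin_cases i <;> · simp; push_cast; ring]
    rw [Matrix.exp_diagonal,
      show NormedSpace.exp ![(-(r*θ:ℝ):ℂ) * Complex.I, ((r*θ:ℝ):ℂ) * Complex.I]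
        = ![Complex.exp ((-(r*θ:ℝ):ℂ) * Complex.I), Complex.exp (((r*θ:ℝ):ℂ) * Complex.I)] by
      funext i; fin_cases i <;> simp [Pi.coe_exp, ← Complex.exp_eq_exp_ℂ]]
  -- First instance: A = 0, f ≡ 0
  have h1 : g 0 0 = 0 := by
    have := hg ![1, 0] (by simp [dotProduct, Fin.sum_univ_two])
      0 G Matrix.isHermitian_zero hGherm hGsq (fun _ => 0)
      (by intro θ; simp) 0 le_rfl hπr
    simpa using this
  -- Second instance
  set s : ℝ := Real.sin (2*r*γ) with hs
  set k : ℝ := Real.cos (2*r*γ) with hk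
  set z : ℂ := -(s:ℂ) + ((1-k:ℝ):ℂ) * Complex.I with hz
  set ψ : Fin 2 → ℂ := fun _ => ((Real.sqrt 2)⁻¹ : ℝ) with hψ
  set A : Matrix (Fin 2) (Fin 2) ℂ := !![(s:ℂ), z; starRingEnd ℂ z, s] with hA
  have hψ1 : star ψ ⬝ᵥ ψ = 1 := by
    have h2 : ((Real.sqrt 2)⁻¹ : ℝ) * (Real.sqrt 2)⁻¹ = 1/2 := by
      rw [← mul_inv]
      rw [← Real.sqrt_mul_self (by norm_num : (0:ℝ) ≤ 2)]
      norm_num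
    simp [hψ, dotProduct, Fin.sum_univ_two]
    rw [← Complex.ofReal_inv, ← Complex.ofReal_mul, h2]
    norm_num
  have hAherm : A.IsHermitian := by
    rw [Matrix.IsHermitian]
    funext i j
    fin_cases i <;> fin_cases j <;>
      simp [hA, Matrix.conjTranspose_apply, Complex.ext_iff]
  set f₂ : ℝ → ℝ := fun θ => s - s * Real.cos (2*r*θ) + (k-1) * Real.sin (2*r*θ) with hf₂def
  have hf₂ : ∀ θ : ℝ, f₂ θ =
      (star ψ ⬝ᵥ ((NormedSpace.exp ((Complex.I * (θ : ℂ)) • G) * A *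
        NormedSpace.exp ((-(Complex.I * (θ : ℂ))) • G)) *ᵥ ψ)).re := by
    intro θ
    rw [hexp, hexp']
    have h2 : ((Real.sqrt 2)⁻¹ : ℝ) * (Real.sqrt 2)⁻¹ = 1/2 := by
      rw [← mul_inv, ← Real.sqrt_mul_self (by norm_num : (0:ℝ) ≤ 2)]; norm_num
    have e1 : Complex.exp (((r*θ:ℝ):ℂ) * Complex.I)
        = ((Real.cos (r*θ):ℝ):ℂ) + ((Real.sin (r*θ):ℝ):ℂ) * Complex.I := by
      rw [Complex.exp_mul_I, ← Complex.ofReal_cos, ← Complex.ofReal_sin]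
    have e2 : Complex.exp ((-(r*θ:ℝ):ℂ) * Complex.I)
        = ((Real.cos (r*θ):ℝ):ℂ) - ((Real.sin (r*θ):ℝ):ℂ) * Complex.I := by
      rw [show ((-(r*θ:ℝ):ℂ)) = (((-(r*θ):ℝ):ℂ)) by push_cast; ring, Complex.exp_mul_I,
        ← Complex.ofReal_cos, ← Complex.ofReal_sin, Real.cos_neg, Real.sin_neg]
      push_cast
      ring
    simp only [Matrix.mul_apply, Matrix.mulVec, dotProduct, Fin.sum_univ_two,
      Matrix.diagonal_apply, hA, hψ, Matrix.cons_val', Matrix.cons_val_zero,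
      Matrix.cons_val_one, Matrix.head_cons, Matrix.head_fin_const, Matrix.cons_val_fin_one,
      Matrix.empty_val', Pi.star_apply, e1, e2, hz]
    simp only [Matrix.of_apply, Matrix.cons_val', Matrix.cons_val_zero, Matrix.cons_val_one,
      Matrix.head_cons, Matrix.head_fin_const, Matrix.empty_val', Matrix.cons_val_fin_one]
    have hsc := Real.sin_sq_add_cos_sq (r*θ)
    have hcos2 : Real.cos (2*r*θ) = Real.cos (r*θ)^2 - Real.sin (r*θ)^2 := by
      rw [show 2*r*θ = 2*(r*θ) by ring, Real.cos_two_mul']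
    have hsin2 : Real.sin (2*r*θ) = 2 * Real.sin (r*θ) * Real.cos (r*θ) := by
      rw [show 2*r*θ = 2*(r*θ) by ring, Real.sin_two_mul]
    simp only [hf₂def, hcos2, hsin2]
    simp [Complex.ext_iff, Complex.add_re, Complex.mul_re, Complex.sub_re, Complex.ofReal_re,
      Complex.ofReal_im, Complex.I_re, Complex.I_im, Complex.add_im, Complex.mul_im,
      Complex.sub_im, RCLike.star_def, Complex.conj_re, Complex.conj_im,
      ← Complex.ofReal_mul, Complex.cos_ofReal_re, Complex.sin_ofReal_re,
      Complex.cos_ofReal_im, Complex.sin_ofReal_im]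
    ring_nf
    rw [show Real.sqrt 2 ^ 2 = 2 from Real.sq_sqrt (by norm_num)]
    linear_combination (-s) * hsc
  have h2 := hg ψ hψ1 A G hAherm hGherm hGsq f₂ hf₂ 0 le_rfl hπr
  have hf0 : f₂ 0 = 0 := by simp [hf₂def]
  have hfγ : f₂ γ = 0 := by
    simp only [hf₂def]
    rw [← hs, ← hk]
    ring
  have hderiv : deriv f₂ 0 = 2*r*(k-1) := by
    have hd : HasDerivAt f₂ (s * (Real.sin (2*r*0) * (2*r)) + (k-1) * (Real.cos (2*r*0) * (2*r))) 0 := by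
      have hid : HasDerivAt (fun θ : ℝ => 2*r*θ) (2*r) 0 := by
        simpa using (hasDerivAt_id (0:ℝ)).const_mul (2*r)
      have hc : HasDerivAt (fun θ : ℝ => Real.cos (2*r*θ)) (-Real.sin (2*r*0) * (2*r)) 0 :=
        (Real.hasDerivAt_cos (2*r*0)).comp 0 hid
      have hsn : HasDerivAt (fun θ : ℝ => Real.sin (2*r*θ)) (Real.cos (2*r*0) * (2*r)) 0 :=
        (Real.hasDerivAt_sin (2*r*0)).comp 0 hid
      have := ((hasDerivAt_const (0:ℝ) s).sub (hc.const_mul s)).add (hsn.const_mul (k-1))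
      exact this.congr_deriv (by ring)
    rw [hd.deriv]
    simp
    ring
  rw [zero_add] at h2
  rw [hf0, hfγ, h1, hderiv] at h2
  have hk1 : k < 1 := by
    rcases lt_or_eq_of_le (Real.cos_le_one (2*r*γ)) with h | h
    · exact h
    · exfalso
      have h2rγ : 0 < 2*r*γ := by positivity
      have h2rγ' : 2*r*γ < 2*Real.pi := by
        have := (lt_div_iff₀ hr).mp hγ'
        nlinarith
      have := (Real.cos_eq_one_iff_of_lt_of_lt (by linarith) (by linarith [h2rγ'])).mp h
      linarith
  have : 2*r*(k-1) < 0 := by nlinarith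
  linarith [h2.symm]
end

section
/- Fix r > 0 and 0 < γ < π/r. There exist two functions f, f̃ of the form f(θ) = ⟨ψ| e^{iθG} A e^{-iθG} |ψ⟩ and f̃(θ) = ⟨ψ̃| e^{iθF} B e^{-iθF} |ψ̃⟩ (with ψ, ψ̃ unit vectors in ℂ², A, B Hermitian, and G, F Hermitian with G² = F² = r²I) and a point ζ ∈ ℝ such that f(ζ) = f̃(ζ) and f(ζ + γ) = f̃(ζ + γ), but f'(ζ) ≠ f̃'(ζ). -/
open Matrix

private lemma exp_diag_aux (θ r : ℝ) :
    NormedSpace.exp ((Complex.I * (θ:ℂ)) • Matrix.diagonal ![(r:ℂ), -r]) =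
      Matrix.diagonal ![Complex.exp (Complex.I*θ*r), Complex.exp (-(Complex.I*θ*r))] := by
  have hv : NormedSpace.exp ((Complex.I * (θ:ℂ)) • ![(r:ℂ), -r]) =
      ![Complex.exp (Complex.I*θ*r), Complex.exp (-(Complex.I*θ*r))] := by
    funext i
    rw [Pi.coe_exp, ← Complex.exp_eq_exp_ℂ]
    fin_cases i <;> simp
  rw [← Matrix.diagonal_smul, Matrix.exp_diagonal, hv]

private lemma exp_diag_aux' (θ r : ℝ) :
    NormedSpace.exp ((-(Complex.I * (θ:ℂ))) • Matrix.diagonal ![(r:ℂ), -r]) =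
      Matrix.diagonal ![Complex.exp (-(Complex.I*θ*r)), Complex.exp (Complex.I*θ*r)] := by
  have hv : NormedSpace.exp ((-(Complex.I * (θ:ℂ))) • ![(r:ℂ), -r]) =
      ![Complex.exp (-(Complex.I*θ*r)), Complex.exp (Complex.I*θ*r)] := by
    funext i
    rw [Pi.coe_exp, ← Complex.exp_eq_exp_ℂ]
    fin_cases i <;> simp [mul_comm, mul_assoc, mul_left_comm]
  rw [← Matrix.diagonal_smul, Matrix.exp_diagonal, hv]

private lemma s_mul_s : ((((Real.sqrt 2)⁻¹ : ℝ)) : ℂ) * (((Real.sqrt 2)⁻¹ : ℝ) : ℂ)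
    = 1/2 := by
  rw [← Complex.ofReal_mul]
  have : ((Real.sqrt 2)⁻¹ * (Real.sqrt 2)⁻¹ : ℝ) = 1/2 := by
    rw [← mul_inv, Real.mul_self_sqrt (by norm_num)]
    norm_num
  rw [this]
  norm_num

theorem stmt_13 (r γ : ℝ) (hr : 0 < r) (hγ : 0 < γ) (hγ' : γ < Real.pi / r) :
    ∃ (ψ ψ' : Fin 2 → ℂ) (A B G F : Matrix (Fin 2) (Fin 2) ℂ) (f f' : ℝ → ℝ) (ζ : ℝ),
      star ψ ⬝ᵥ ψ = 1 ∧ star ψ' ⬝ᵥ ψ' = 1 ∧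
      A.IsHermitian ∧ B.IsHermitian ∧ G.IsHermitian ∧ F.IsHermitian ∧
      G * G = ((r : ℂ) ^ 2) • (1 : Matrix (Fin 2) (Fin 2) ℂ) ∧
      F * F = ((r : ℂ) ^ 2) • (1 : Matrix (Fin 2) (Fin 2) ℂ) ∧
      (∀ θ : ℝ, f θ =
        (star ψ ⬝ᵥ ((NormedSpace.exp ((Complex.I * (θ : ℂ)) • G) * A *
          NormedSpace.exp ((-(Complex.I * (θ : ℂ))) • G)) *ᵥ ψ)).re) ∧
      (∀ θ : ℝ, f' θ =
        (star ψ' ⬝ᵥ ((NormedSpace.exp ((Complex.I * (θ : ℂ)) • F) * B *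
          NormedSpace.exp ((-(Complex.I * (θ : ℂ))) • F)) *ᵥ ψ')).re) ∧
      f ζ = f' ζ ∧ f (ζ + γ) = f' (ζ + γ) ∧ deriv f ζ ≠ deriv f' ζ := by
  classical
  set s : ℝ := (Real.sqrt 2)⁻¹ with hs
  refine ⟨![1, 0], ![(s:ℂ), (s:ℂ)],
    (((Real.cos (r*γ) : ℝ)) : ℂ) • 1, !![0,1;1,0],
    Matrix.diagonal ![(r:ℂ), -r], Matrix.diagonal ![(r:ℂ), -r],
    (fun _ => Real.cos (r*γ)), (fun θ => Real.cos (2*r*θ)), -(γ/2),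
    ?_, ?_, ?_, ?_, ?_, ?_, ?_, ?_, ?_, ?_, ?_, ?_, ?_⟩
  · simp [dotProduct, Fin.sum_univ_two]
  · simp only [dotProduct, Fin.sum_univ_two]
    simp only [Pi.star_apply, Matrix.cons_val_zero, Matrix.cons_val_one, Matrix.head_cons]
    rw [Complex.star_def, Complex.conj_ofReal, hs, s_mul_s]
    norm_num
  · -- A Hermitian
    show ((((Real.cos (r*γ) : ℝ)) : ℂ) • (1 : Matrix (Fin 2) (Fin 2) ℂ))ᴴ = _
    rw [Matrix.conjTranspose_smul, Matrix.conjTranspose_one]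
    congr 1
    exact Complex.conj_ofReal _
  · show (!![(0:ℂ),1;1,0])ᴴ = _
    ext i j; fin_cases i <;> fin_cases j <;> simp [Matrix.conjTranspose_apply]
  · show (Matrix.diagonal ![(r:ℂ), -r])ᴴ = _
    ext i j; fin_cases i <;> fin_cases j <;>
      simp [Matrix.conjTranspose_apply, Matrix.diagonal]
  · show (Matrix.diagonal ![(r:ℂ), -r])ᴴ = _
    ext i j; fin_cases i <;> fin_cases j <;>
      simp [Matrix.conjTranspose_apply, Matrix.diagonal]
  · rw [Matrix.diagonal_mul_diagonal]
    ext i j; fin_cases i <;> fin_cases j <;>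
      simp [Matrix.diagonal, Matrix.one_apply] <;> ring
  · rw [Matrix.diagonal_mul_diagonal]
    ext i j; fin_cases i <;> fin_cases j <;>
      simp [Matrix.diagonal, Matrix.one_apply] <;> ring
  · -- f computation
    intro θ
    rw [exp_diag_aux, exp_diag_aux']
    have hM : Matrix.diagonal ![Complex.exp (Complex.I*θ*r), Complex.exp (-(Complex.I*θ*r))] *
        ((((Real.cos (r*γ) : ℝ)) : ℂ) • 1) *
        Matrix.diagonal ![Complex.exp (-(Complex.I*θ*r)), Complex.exp (Complex.I*θ*r)] =
        (((Real.cos (r*γ) : ℝ)) : ℂ) • 1 := by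
      rw [Matrix.mul_smul, Matrix.mul_one, Matrix.smul_mul, Matrix.diagonal_mul_diagonal]
      congr 1
      have h1 : ∀ i : Fin 2,
          (![Complex.exp (Complex.I*θ*r), Complex.exp (-(Complex.I*θ*r))] i *
           ![Complex.exp (-(Complex.I*θ*r)), Complex.exp (Complex.I*θ*r)] i) = 1 := by
        intro i; fin_cases i <;> simp [← Complex.exp_add]
      calc Matrix.diagonal (fun i =>
            ![Complex.exp (Complex.I*θ*r), Complex.exp (-(Complex.I*θ*r))] i *
            ![Complex.exp (-(Complex.I*θ*r)), Complex.exp (Complex.I*θ*r)] i)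
          = Matrix.diagonal (fun _ => (1:ℂ)) :=
            congrArg Matrix.diagonal (funext h1)
        _ = 1 := Matrix.diagonal_one
    rw [hM]
    simp only [Matrix.mulVec, dotProduct, Fin.sum_univ_two, Matrix.smul_apply,
      Matrix.one_apply, Pi.star_apply]
    simp
    rw [← Complex.ofReal_mul, ← Complex.ofReal_cos, Complex.ofReal_re]
  · -- f' computation
    intro θ
    rw [exp_diag_aux, exp_diag_aux']
    have hM : Matrix.diagonal ![Complex.exp (Complex.I*θ*r), Complex.exp (-(Complex.I*θ*r))] *
        !![0,1;1,0] *
        Matrix.diagonal ![Complex.exp (-(Complex.I*θ*r)), Complex.exp (Complex.I*θ*r)] =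
        !![0, Complex.exp (Complex.I*θ*r) * Complex.exp (Complex.I*θ*r);
           Complex.exp (-(Complex.I*θ*r)) * Complex.exp (-(Complex.I*θ*r)), 0] := by
      ext i j; fin_cases i <;> fin_cases j <;>
        simp [Matrix.mul_apply, Fin.sum_univ_two, Matrix.diagonal]
    rw [hM]
    have hdot : (star ![(s:ℂ), (s:ℂ)] ⬝ᵥ
        (!![0, Complex.exp (Complex.I*θ*r) * Complex.exp (Complex.I*θ*r);
           Complex.exp (-(Complex.I*θ*r)) * Complex.exp (-(Complex.I*θ*r)), 0] *ᵥ
          ![(s:ℂ), (s:ℂ)])) =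
        ((s:ℂ)*(s:ℂ)) * (Complex.exp (Complex.I*(2*r*θ)) + Complex.exp (-(Complex.I*(2*r*θ)))) := by
      simp only [Matrix.mulVec, dotProduct, Fin.sum_univ_two, Pi.star_apply,
        Matrix.cons_val_zero, Matrix.cons_val_one, Matrix.head_cons,
        Matrix.cons_val', Matrix.empty_val', Matrix.cons_val_fin_one,
        Matrix.of_apply, Matrix.vecHead, Matrix.vecTail]
      rw [Complex.star_def, Complex.conj_ofReal, ← Complex.exp_add, ← Complex.exp_add]
      rw [show Complex.I*θ*r + Complex.I*θ*r = Complex.I*(2*r*θ) by push_cast; ring]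
      rw [show -(Complex.I*θ*r) + -(Complex.I*θ*r) = -(Complex.I*(2*r*θ)) by push_cast; ring]
      ring
    rw [hdot, hs, s_mul_s]
    have hcos : Complex.exp (Complex.I*(2*r*θ)) + Complex.exp (-(Complex.I*(2*r*θ))) =
        2 * Complex.cos (2*r*θ) := by
      rw [Complex.cos]
      ring_nf
    rw [hcos, show (1/2 : ℂ) * (2 * Complex.cos ((2:ℂ)*r*θ)) = Complex.cos ((2:ℂ)*r*θ) by ring]
    rw [show ((2:ℂ)*r*θ) = ((2*r*θ : ℝ) : ℂ) by push_cast; ring]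
    rw [← Complex.ofReal_cos, Complex.ofReal_re]
  · -- f ζ = f' ζ
    show Real.cos (r*γ) = Real.cos (2*r*(-(γ/2)))
    rw [show 2*r*(-(γ/2)) = -(r*γ) by ring, Real.cos_neg]
  · show Real.cos (r*γ) = Real.cos (2*r*(-(γ/2)+γ))
    rw [show 2*r*(-(γ/2)+γ) = r*γ by ring]
  · -- derivatives
    have hd1 : deriv (fun _ : ℝ => Real.cos (r*γ)) (-(γ/2)) = 0 := deriv_const _ _
    have hd2 : deriv (fun θ : ℝ => Real.cos (2*r*θ)) (-(γ/2)) = 2*r*Real.sin (r*γ) := by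
      have h : HasDerivAt (fun θ : ℝ => Real.cos (2*r*θ))
          (-Real.sin (2*r*(-(γ/2))) * (2*r)) (-(γ/2)) := by
        exact (Real.hasDerivAt_cos (2*r*(-(γ/2)))).comp _
          (by simpa using (hasDerivAt_id (-(γ/2))).const_mul (2*r))
      rw [h.deriv, show 2*r*(-(γ/2)) = -(r*γ) by ring, Real.sin_neg]
      ring
    rw [hd1, hd2]
    have hsin : 0 < Real.sin (r*γ) := by
      apply Real.sin_pos_of_pos_of_lt_pi
      · positivity
      · have := (lt_div_iff₀ hr).mp hγ'
        nlinarith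
    intro h
    have : (0:ℝ) < 2*r*Real.sin (r*γ) := by positivity
    linarith [this, h.symm.le]
end

section
/- Let f(θ₁, θ₂) = ⟨ψ| e^{iθ₁G₁} e^{iθ₂G₂} A e^{-iθ₂G₂} e^{-iθ₁G₁} |ψ⟩ where G₁, G₂ are commuting Hermitian matrices with G₁² = G₂² = r²I. Then the mixed partial derivative satisfies ∂²f/∂θ₁∂θ₂ (θ₁, θ₂) = r²·[f(θ₁+γ₁, θ₂+γ₂) + f(θ₁-γ₁, θ₂-γ₂) - f(θ₁+γ₁, θ₂-γ₂) - f(θ₁-γ₁, θ₂+γ₂)] / (sin(2rγ₁)·sin(2rγ₂)) for any γ₁, γ₂ with sin(2rγ₁)·sin(2rγ₂) ≠ 0. -/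
open Matrix

open Real

set_option maxHeartbeats 1000000 in
lemma exp_form {n : ℕ} (G : Matrix (Fin n) (Fin n) ℂ) (r : ℝ) (hr : r ≠ 0)
    (hG2 : G * G = ((r : ℂ) ^ 2) • (1 : Matrix (Fin n) (Fin n) ℂ)) (x : ℝ) :
    NormedSpace.exp ((Complex.I * (x : ℂ)) • G)
      = ((Real.cos (r * x) : ℝ) : ℂ) • (1 : Matrix (Fin n) (Fin n) ℂ)
        + ((Real.sin (r * x) / r : ℝ) : ℂ) • (Complex.I • G) := by
  have hrc : (r : ℂ) ≠ 0 := Complex.ofReal_ne_zero.mpr hr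
  have hGeven : ∀ k : ℕ, G ^ (2 * k) = (((r : ℂ) ^ (2 * k))) • (1 : Matrix (Fin n) (Fin n) ℂ) := by
    intro k
    induction k with
    | zero => simp
    | succ k ih =>
      have h2 : 2 * (k + 1) = 2 * k + 2 := by ring
      rw [h2, pow_add, ih, pow_two, hG2, smul_mul_assoc, Matrix.one_mul, smul_smul, pow_add]
  have hGodd : ∀ k : ℕ, G ^ (2 * k + 1) = (((r : ℂ) ^ (2 * k))) • G := by
    intro k
    rw [pow_succ, hGeven, smul_mul_assoc, Matrix.one_mul]
  have hIe : ∀ k : ℕ, (Complex.I * (x:ℂ)) ^ (2*k) = (-1)^k * (x:ℂ)^(2*k) := by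
    intro k
    rw [pow_mul, mul_pow, Complex.I_sq, pow_mul]
    ring
  have heven : HasSum (fun k : ℕ => ((((2*k).factorial : ℂ))⁻¹) • ((Complex.I * (x:ℂ)) • G) ^ (2*k))
      ((Complex.cos ((r*x : ℝ) : ℂ)) • (1 : Matrix (Fin n) (Fin n) ℂ)) := by
    have h := (Complex.hasSum_cos ((r*x : ℝ) : ℂ)).smul_const (1 : Matrix (Fin n) (Fin n) ℂ)
    convert h using 2 with k
    rw [smul_pow, hGeven, smul_smul, smul_smul]
    congr 1
    rw [hIe]
    push_cast
    rw [mul_pow]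
    field_simp
  have hodd : HasSum (fun k : ℕ => ((((2*k+1).factorial : ℂ))⁻¹) • ((Complex.I * (x:ℂ)) • G) ^ (2*k+1))
      (((Complex.I * Complex.sin ((r*x : ℝ) : ℂ) * ((r:ℂ))⁻¹)) • G) := by
    have h := ((Complex.hasSum_sin ((r*x : ℝ) : ℂ)).mul_left (Complex.I * ((r:ℂ))⁻¹)).smul_const G
    convert h using 2 with k
    · rw [smul_pow, hGodd, smul_smul, smul_smul]
      congr 1
      have hI : (Complex.I * (x:ℂ)) ^ (2*k+1) = Complex.I * ((-1)^k * (x:ℂ)^(2*k+1)) := by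
        rw [pow_succ, hIe]
        ring
      rw [hI]
      push_cast
      rw [mul_pow, pow_succ ((r:ℂ)) (2*k), div_eq_mul_inv]
      linear_combination (-Complex.I * (-1:ℂ)^k * (x:ℂ)^(2*k+1) * (r:ℂ)^(2*k) * (((2*k+1).factorial : ℂ))⁻¹) * inv_mul_cancel₀ hrc
    · ring
  have hsum := HasSum.even_add_odd
    (f := fun k : ℕ => ((k.factorial : ℂ))⁻¹ • ((Complex.I * (x:ℂ)) • G) ^ k) heven hodd
  rw [NormedSpace.exp_eq_tsum (𝕂 := ℂ)]
  beta_reduce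
  rw [hsum.tsum_eq]
  congr 1
  · rw [← Complex.ofReal_cos]
  · have hc : (Complex.I * Complex.sin ((r*x : ℝ) : ℂ) * ((r:ℂ))⁻¹)
        = ((Real.sin (r*x)/r : ℝ) : ℂ) * Complex.I := by
      rw [← Complex.ofReal_sin]
      push_cast
      ring
    rw [hc, mul_smul]

set_option maxHeartbeats 1000000 in
lemma key_aux {n : ℕ} (ψ : Fin n → ℂ) (A H₁ H₂ : Matrix (Fin n) (Fin n) ℂ) (c₁ s₁ c₂ s₂ : ℂ) :
    star ψ ⬝ᵥ (((c₁ • (1 : Matrix (Fin n) (Fin n) ℂ) + s₁ • H₁) * (c₂ • 1 + s₂ • H₂) * A *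
        (c₂ • 1 - s₂ • H₂) * (c₁ • 1 - s₁ • H₁)) *ᵥ ψ)
    = c₁^2*c₂^2 * (star ψ ⬝ᵥ (A *ᵥ ψ))
      + c₁^2*(c₂*s₂) * (star ψ ⬝ᵥ ((H₂*A - A*H₂) *ᵥ ψ))
      - c₁^2*s₂^2 * (star ψ ⬝ᵥ ((H₂*A*H₂) *ᵥ ψ))
      + (c₁*s₁)*c₂^2 * (star ψ ⬝ᵥ ((H₁*A - A*H₁) *ᵥ ψ))
      + (c₁*s₁)*(c₂*s₂) * (star ψ ⬝ᵥ ((H₁*H₂*A - H₁*A*H₂ - H₂*A*H₁ + A*H₂*H₁) *ᵥ ψ))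
      - (c₁*s₁)*s₂^2 * (star ψ ⬝ᵥ ((H₁*H₂*A*H₂ - H₂*A*H₂*H₁) *ᵥ ψ))
      - s₁^2*c₂^2 * (star ψ ⬝ᵥ ((H₁*A*H₁) *ᵥ ψ))
      - s₁^2*(c₂*s₂) * (star ψ ⬝ᵥ ((H₁*H₂*A*H₁ - H₁*A*H₂*H₁) *ᵥ ψ))
      + s₁^2*s₂^2 * (star ψ ⬝ᵥ ((H₁*H₂*A*H₂*H₁) *ᵥ ψ)) := by
  simp only [← Matrix.mulVec_mulVec, Matrix.add_mulVec, Matrix.sub_mulVec,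
    Matrix.smul_mulVec, Matrix.one_mulVec, Matrix.mulVec_add, Matrix.mulVec_sub,
    Matrix.mulVec_smul, dotProduct_add, dotProduct_sub, dotProduct_smul, smul_eq_mul]
  ring

lemma hd_cos (r x : ℝ) : HasDerivAt (fun y => Real.cos (r*y)) (-(r * Real.sin (r*x))) x := by
  have h := (Real.hasDerivAt_cos (r*x)).comp x ((hasDerivAt_id x).const_mul r)
  simpa [mul_comm, Function.comp_def] using h

lemma hd_sin (r x : ℝ) : HasDerivAt (fun y => Real.sin (r*y)) (r * Real.cos (r*x)) x := by
  have h := (Real.hasDerivAt_sin (r*x)).comp x ((hasDerivAt_id x).const_mul r)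
  simpa [mul_comm, Function.comp_def] using h

lemma hd_cos_sq (r x : ℝ) : HasDerivAt (fun y => Real.cos (r*y)^2) (-2*r*Real.sin (r*x)*Real.cos (r*x)) x := by
  have h := (hd_cos r x).pow 2
  refine h.congr_deriv ?_
  push_cast
  ring

lemma hd_sin_sq (r x : ℝ) : HasDerivAt (fun y => Real.sin (r*y)^2) (2*r*Real.sin (r*x)*Real.cos (r*x)) x := by
  have h := (hd_sin r x).pow 2
  refine h.congr_deriv ?_
  push_cast
  ring

lemma hd_sincos (r x : ℝ) : HasDerivAt (fun y => Real.sin (r*y)*Real.cos (r*y)) (r*Real.cos (r*x)^2 - r*Real.sin (r*x)^2) x := by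
  have h := (hd_sin r x).mul (hd_cos r x)
  refine h.congr_deriv ?_
  ring

set_option maxHeartbeats 1000000 in
lemma lemB (r : ℝ) (g : ℝ → ℝ → ℝ) (a₁ a₂ a₃ a₄ a₅ a₆ a₇ a₈ a₉ : ℝ)
    (hg : ∀ x y, g x y =
      a₁ * (cos (r*x)^2 * cos (r*y)^2) + a₂ * (cos (r*x)^2 * sin (r*y)^2)
      + a₃ * (cos (r*x)^2 * (sin (r*y) * cos (r*y)))
      + a₄ * (sin (r*x)^2 * cos (r*y)^2) + a₅ * (sin (r*x)^2 * sin (r*y)^2)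
      + a₆ * (sin (r*x)^2 * (sin (r*y) * cos (r*y)))
      + a₇ * (sin (r*x) * cos (r*x) * cos (r*y)^2) + a₈ * (sin (r*x) * cos (r*x) * sin (r*y)^2)
      + a₉ * (sin (r*x) * cos (r*x) * (sin (r*y) * cos (r*y))))
    (θ₁ θ₂ γ₁ γ₂ : ℝ) (hγ : sin (2*r*γ₁) * sin (2*r*γ₂) ≠ 0) :
    deriv (fun t₁ => deriv (fun t₂ => g t₁ t₂) θ₂) θ₁ =
      r^2 * (g (θ₁+γ₁) (θ₂+γ₂) + g (θ₁-γ₁) (θ₂-γ₂) - g (θ₁+γ₁) (θ₂-γ₂) - g (θ₁-γ₁) (θ₂+γ₂))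
      / (sin (2*r*γ₁) * sin (2*r*γ₂)) := by
  have hinner : ∀ x : ℝ, deriv (fun y => g x y) θ₂ =
      a₁ * (cos (r*x)^2 * (-2*r*sin (r*θ₂)*cos (r*θ₂)))
      + a₂ * (cos (r*x)^2 * (2*r*sin (r*θ₂)*cos (r*θ₂)))
      + a₃ * (cos (r*x)^2 * (r*cos (r*θ₂)^2 - r*sin (r*θ₂)^2))
      + a₄ * (sin (r*x)^2 * (-2*r*sin (r*θ₂)*cos (r*θ₂)))
      + a₅ * (sin (r*x)^2 * (2*r*sin (r*θ₂)*cos (r*θ₂)))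
      + a₆ * (sin (r*x)^2 * (r*cos (r*θ₂)^2 - r*sin (r*θ₂)^2))
      + a₇ * (sin (r*x) * cos (r*x) * (-2*r*sin (r*θ₂)*cos (r*θ₂)))
      + a₈ * (sin (r*x) * cos (r*x) * (2*r*sin (r*θ₂)*cos (r*θ₂)))
      + a₉ * (sin (r*x) * cos (r*x) * (r*cos (r*θ₂)^2 - r*sin (r*θ₂)^2)) := by
    intro x
    have e : (fun y => g x y) = (fun y =>
      a₁ * (cos (r*x)^2 * cos (r*y)^2) + a₂ * (cos (r*x)^2 * sin (r*y)^2)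
      + a₃ * (cos (r*x)^2 * (sin (r*y) * cos (r*y)))
      + a₄ * (sin (r*x)^2 * cos (r*y)^2) + a₅ * (sin (r*x)^2 * sin (r*y)^2)
      + a₆ * (sin (r*x)^2 * (sin (r*y) * cos (r*y)))
      + a₇ * (sin (r*x) * cos (r*x) * cos (r*y)^2) + a₈ * (sin (r*x) * cos (r*x) * sin (r*y)^2)
      + a₉ * (sin (r*x) * cos (r*x) * (sin (r*y) * cos (r*y)))) := funext (hg x)
    rw [e]
    refine HasDerivAt.deriv ?_
    exact ((((((((((hd_cos_sq r θ₂).const_mul (cos (r*x)^2)).const_mul a₁).add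
      (((hd_sin_sq r θ₂).const_mul (cos (r*x)^2)).const_mul a₂)).add
      (((hd_sincos r θ₂).const_mul (cos (r*x)^2)).const_mul a₃)).add
      (((hd_cos_sq r θ₂).const_mul (sin (r*x)^2)).const_mul a₄)).add
      (((hd_sin_sq r θ₂).const_mul (sin (r*x)^2)).const_mul a₅)).add
      (((hd_sincos r θ₂).const_mul (sin (r*x)^2)).const_mul a₆)).add
      (((hd_cos_sq r θ₂).const_mul (sin (r*x) * cos (r*x))).const_mul a₇)).add
      (((hd_sin_sq r θ₂).const_mul (sin (r*x) * cos (r*x))).const_mul a₈)).add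
      (((hd_sincos r θ₂).const_mul (sin (r*x) * cos (r*x))).const_mul a₉)
  have e2 : (fun t₁ => deriv (fun t₂ => g t₁ t₂) θ₂) = (fun x =>
      a₁ * (cos (r*x)^2 * (-2*r*sin (r*θ₂)*cos (r*θ₂)))
      + a₂ * (cos (r*x)^2 * (2*r*sin (r*θ₂)*cos (r*θ₂)))
      + a₃ * (cos (r*x)^2 * (r*cos (r*θ₂)^2 - r*sin (r*θ₂)^2))
      + a₄ * (sin (r*x)^2 * (-2*r*sin (r*θ₂)*cos (r*θ₂)))
      + a₅ * (sin (r*x)^2 * (2*r*sin (r*θ₂)*cos (r*θ₂)))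
      + a₆ * (sin (r*x)^2 * (r*cos (r*θ₂)^2 - r*sin (r*θ₂)^2))
      + a₇ * (sin (r*x) * cos (r*x) * (-2*r*sin (r*θ₂)*cos (r*θ₂)))
      + a₈ * (sin (r*x) * cos (r*x) * (2*r*sin (r*θ₂)*cos (r*θ₂)))
      + a₉ * (sin (r*x) * cos (r*x) * (r*cos (r*θ₂)^2 - r*sin (r*θ₂)^2))) := funext hinner
  rw [e2]
  have houter : HasDerivAt (fun x =>
      a₁ * (cos (r*x)^2 * (-2*r*sin (r*θ₂)*cos (r*θ₂)))
      + a₂ * (cos (r*x)^2 * (2*r*sin (r*θ₂)*cos (r*θ₂)))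
      + a₃ * (cos (r*x)^2 * (r*cos (r*θ₂)^2 - r*sin (r*θ₂)^2))
      + a₄ * (sin (r*x)^2 * (-2*r*sin (r*θ₂)*cos (r*θ₂)))
      + a₅ * (sin (r*x)^2 * (2*r*sin (r*θ₂)*cos (r*θ₂)))
      + a₆ * (sin (r*x)^2 * (r*cos (r*θ₂)^2 - r*sin (r*θ₂)^2))
      + a₇ * (sin (r*x) * cos (r*x) * (-2*r*sin (r*θ₂)*cos (r*θ₂)))
      + a₈ * (sin (r*x) * cos (r*x) * (2*r*sin (r*θ₂)*cos (r*θ₂)))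
      + a₉ * (sin (r*x) * cos (r*x) * (r*cos (r*θ₂)^2 - r*sin (r*θ₂)^2)))
      (a₁ * ((-2*r*sin (r*θ₁)*cos (r*θ₁)) * (-2*r*sin (r*θ₂)*cos (r*θ₂)))
      + a₂ * ((-2*r*sin (r*θ₁)*cos (r*θ₁)) * (2*r*sin (r*θ₂)*cos (r*θ₂)))
      + a₃ * ((-2*r*sin (r*θ₁)*cos (r*θ₁)) * (r*cos (r*θ₂)^2 - r*sin (r*θ₂)^2))
      + a₄ * ((2*r*sin (r*θ₁)*cos (r*θ₁)) * (-2*r*sin (r*θ₂)*cos (r*θ₂)))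
      + a₅ * ((2*r*sin (r*θ₁)*cos (r*θ₁)) * (2*r*sin (r*θ₂)*cos (r*θ₂)))
      + a₆ * ((2*r*sin (r*θ₁)*cos (r*θ₁)) * (r*cos (r*θ₂)^2 - r*sin (r*θ₂)^2))
      + a₇ * ((r*cos (r*θ₁)^2 - r*sin (r*θ₁)^2) * (-2*r*sin (r*θ₂)*cos (r*θ₂)))
      + a₈ * ((r*cos (r*θ₁)^2 - r*sin (r*θ₁)^2) * (2*r*sin (r*θ₂)*cos (r*θ₂)))
      + a₉ * ((r*cos (r*θ₁)^2 - r*sin (r*θ₁)^2) * (r*cos (r*θ₂)^2 - r*sin (r*θ₂)^2))) θ₁ := by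
    exact ((((((((((hd_cos_sq r θ₁).mul_const _).const_mul a₁).add
      (((hd_cos_sq r θ₁).mul_const _).const_mul a₂)).add
      (((hd_cos_sq r θ₁).mul_const _).const_mul a₃)).add
      (((hd_sin_sq r θ₁).mul_const _).const_mul a₄)).add
      (((hd_sin_sq r θ₁).mul_const _).const_mul a₅)).add
      (((hd_sin_sq r θ₁).mul_const _).const_mul a₆)).add
      (((hd_sincos r θ₁).mul_const _).const_mul a₇)).add
      (((hd_sincos r θ₁).mul_const _).const_mul a₈)).add
      (((hd_sincos r θ₁).mul_const _).const_mul a₉)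
  rw [houter.deriv]
  rw [eq_div_iff hγ]
  have h1 : (2*r*γ₁) = r*γ₁ + r*γ₁ := by ring
  have h2 : (2*r*γ₂) = r*γ₂ + r*γ₂ := by ring
  simp only [hg, h1, h2, mul_add, mul_sub, sin_add, cos_add, sin_sub, cos_sub]
  ring

set_option maxHeartbeats 1000000 in
lemma exp_form_neg {n : ℕ} (G : Matrix (Fin n) (Fin n) ℂ) (r : ℝ) (hr : r ≠ 0)
    (hG2 : G * G = ((r : ℂ) ^ 2) • (1 : Matrix (Fin n) (Fin n) ℂ)) (x : ℝ) :
    NormedSpace.exp ((-(Complex.I * (x : ℂ))) • G)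
      = ((Real.cos (r * x) : ℝ) : ℂ) • (1 : Matrix (Fin n) (Fin n) ℂ)
        - ((Real.sin (r * x) / r : ℝ) : ℂ) • (Complex.I • G) := by
  have h : (-(Complex.I * (x:ℂ))) = Complex.I * ((-x : ℝ) : ℂ) := by push_cast; ring
  rw [h, exp_form G r hr hG2 (-x)]
  rw [mul_neg, Real.cos_neg, Real.sin_neg, neg_div, Complex.ofReal_neg, neg_smul,
    ← sub_eq_add_neg]

set_option maxHeartbeats 1000000 in
theorem stmt_15 {n : ℕ} (ψ : Fin n → ℂ) (hψ : star ψ ⬝ᵥ ψ = 1)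
    (A G₁ G₂ : Matrix (Fin n) (Fin n) ℂ)
    (hA : A.IsHermitian) (hG₁ : G₁.IsHermitian) (hG₂ : G₂.IsHermitian)
    (hcomm : G₁ * G₂ = G₂ * G₁)
    (r : ℝ) (hr : 0 < r)
    (hG₁2 : G₁ * G₁ = ((r : ℂ) ^ 2) • (1 : Matrix (Fin n) (Fin n) ℂ))
    (hG₂2 : G₂ * G₂ = ((r : ℂ) ^ 2) • (1 : Matrix (Fin n) (Fin n) ℂ))
    (f : ℝ → ℝ → ℝ)
    (hf : ∀ θ₁ θ₂ : ℝ, f θ₁ θ₂ =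
      (star ψ ⬝ᵥ ((NormedSpace.exp ((Complex.I * (θ₁ : ℂ)) • G₁) *
        NormedSpace.exp ((Complex.I * (θ₂ : ℂ)) • G₂) * A *
        NormedSpace.exp ((-(Complex.I * (θ₂ : ℂ))) • G₂) *
        NormedSpace.exp ((-(Complex.I * (θ₁ : ℂ))) • G₁)) *ᵥ ψ)).re)
    (θ₁ θ₂ γ₁ γ₂ : ℝ)
    (hγ : Real.sin (2 * r * γ₁) * Real.sin (2 * r * γ₂) ≠ 0) :
    deriv (fun t₁ => deriv (fun t₂ => f t₁ t₂) θ₂) θ₁ =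
      r ^ 2 * (f (θ₁ + γ₁) (θ₂ + γ₂) + f (θ₁ - γ₁) (θ₂ - γ₂)
        - f (θ₁ + γ₁) (θ₂ - γ₂) - f (θ₁ - γ₁) (θ₂ + γ₂))
        / (Real.sin (2 * r * γ₁) * Real.sin (2 * r * γ₂)) := by
  have hr' : r ≠ 0 := ne_of_gt hr
  refine lemB r f
    ((star ψ ⬝ᵥ (A *ᵥ ψ)).re)
    (-(star ψ ⬝ᵥ (((Complex.I•G₂)*A*(Complex.I•G₂)) *ᵥ ψ)).re / r^2)
    ((star ψ ⬝ᵥ (((Complex.I•G₂)*A - A*(Complex.I•G₂)) *ᵥ ψ)).re / r)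
    (-(star ψ ⬝ᵥ (((Complex.I•G₁)*A*(Complex.I•G₁)) *ᵥ ψ)).re / r^2)
    ((star ψ ⬝ᵥ (((Complex.I•G₁)*(Complex.I•G₂)*A*(Complex.I•G₂)*(Complex.I•G₁)) *ᵥ ψ)).re / r^4)
    (-(star ψ ⬝ᵥ (((Complex.I•G₁)*(Complex.I•G₂)*A*(Complex.I•G₁) - (Complex.I•G₁)*A*(Complex.I•G₂)*(Complex.I•G₁)) *ᵥ ψ)).re / r^3)
    ((star ψ ⬝ᵥ (((Complex.I•G₁)*A - A*(Complex.I•G₁)) *ᵥ ψ)).re / r)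
    (-(star ψ ⬝ᵥ (((Complex.I•G₁)*(Complex.I•G₂)*A*(Complex.I•G₂) - (Complex.I•G₂)*A*(Complex.I•G₂)*(Complex.I•G₁)) *ᵥ ψ)).re / r^3)
    ((star ψ ⬝ᵥ (((Complex.I•G₁)*(Complex.I•G₂)*A - (Complex.I•G₁)*A*(Complex.I•G₂) - (Complex.I•G₂)*A*(Complex.I•G₁) + A*(Complex.I•G₂)*(Complex.I•G₁)) *ᵥ ψ)).re / r^2)
    ?_ θ₁ θ₂ γ₁ γ₂ hγ
  intro x y
  rw [hf x y, exp_form G₁ r hr' hG₁2 x, exp_form G₂ r hr' hG₂2 y,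
    exp_form_neg G₂ r hr' hG₂2 y, exp_form_neg G₁ r hr' hG₁2 x, key_aux]
  simp only [← Complex.ofReal_pow, ← Complex.ofReal_mul, Complex.add_re, Complex.sub_re,
    Complex.re_ofReal_mul]
  field_simp
  ring
end
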